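/- Let N ≥ 2 and let x be a signal with support {0,…,N-1} whose corresponding zeros β_1,…,β_{N-1} (in 𝓕x(ω) = C ∏_j (e^{-iω} - β_j)) all lie on the unit circle, |β_j| = 1. If y is any signal with support {0,…,N-1} and |𝓕y(ω)| = |𝓕x(ω)| for all ω, then y[n] = e^{iα} x[n] for some α ∈ ℝ, i.e., the phase retrieval problem is unique up to rotation. -/

import Mathlib

open Complex Polynomial

private lemma circle_inj : Set.InjOn (fun t : ℝ => Complex.exp (-Complex.I * t)) (Set.Ioo (0:ℝ) 1) := by
  intro a ha b hb hab
  obtain ⟨ha1, ha2⟩ := Set.mem_Ioo.mp ha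
  obtain ⟨hb1, hb2⟩ := Set.mem_Ioo.mp hb
  simp only [Complex.exp_eq_exp_iff_exists_int] at hab
  obtain ⟨k, hk⟩ := hab
  have h3 : ((b : ℂ) - a - k * (2 * Real.pi)) * Complex.I = 0 := by
    push_cast
    linear_combination hk
  rcases mul_eq_zero.mp h3 with h4 | h4
  · have h5 : (b : ℝ) - a - k * (2 * Real.pi) = 0 := by exact_mod_cast h4
    have hk0 : k = 0 := by
      by_contra hne
      have h1 : (1:ℝ) ≤ |(k:ℝ)| := by exact_mod_cast Int.one_le_abs hne
      have h2 : |(b:ℝ) - a| < 1 := by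
        rw [abs_lt]
        constructor <;> linarith
      have h6 : (b:ℝ) - a = (k:ℝ) * (2 * Real.pi) := by linarith
      have h7 : |(b:ℝ) - a| = |(k:ℝ)| * (2 * Real.pi) := by
        rw [h6, abs_mul, abs_of_pos Real.two_pi_pos]
      nlinarith [Real.pi_gt_three]
    rw [hk0] at h5
    push_cast at h5
    linarith
  · exact absurd h4 Complex.I_ne_zero

private lemma circle_infinite : (Set.range fun t : ℝ => Complex.exp (-Complex.I * t)).Infinite := by
  have h := (Set.Ioo_infinite (show (0:ℝ) < 1 by norm_num)).image circle_inj
  exact h.mono (Set.image_subset_range _ _)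

private lemma poly_eq_of_circle (p q : Polynomial ℂ)
    (h : ∀ t : ℝ, p.eval (Complex.exp (-Complex.I * t)) = q.eval (Complex.exp (-Complex.I * t))) :
    p = q := by
  rw [← sub_eq_zero]
  apply Polynomial.eq_zero_of_infinite_isRoot
  apply circle_infinite.mono
  rintro z ⟨t, rfl⟩
  simpa [Polynomial.IsRoot, sub_eq_zero] using h t

theorem unique_up_to_rotation_of_unimodular_zeros
    (N : ℕ) (hN : 2 ≤ N) (x : ℤ → ℂ)
    (hxsupp : ∀ n : ℤ, (n < 0 ∨ (N : ℤ) ≤ n) → x n = 0)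
    (hx0 : x 0 ≠ 0) (hxN : x ((N : ℤ) - 1) ≠ 0)
    (C : ℂ) (hC : C ≠ 0) (β : ℕ → ℂ) (hβ : ∀ j < N - 1, ‖β j‖ = 1)
    (hfact : ∀ ω : ℝ,
      ∑ n ∈ Finset.range N, x n * Complex.exp (-Complex.I * (ω : ℂ) * (n : ℂ))
        = C * ∏ j ∈ Finset.range (N - 1), (Complex.exp (-Complex.I * (ω : ℂ)) - β j))
    (y : ℤ → ℂ)
    (hysupp : ∀ n : ℤ, (n < 0 ∨ (N : ℤ) ≤ n) → y n = 0)
    (hint : ∀ ω : ℝ,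
      ‖∑ n ∈ Finset.range N, y n * Complex.exp (-Complex.I * (ω : ℂ) * (n : ℂ))‖
        = ‖∑ n ∈ Finset.range N, x n * Complex.exp (-Complex.I * (ω : ℂ) * (n : ℂ))‖) :
    ∃ α : ℝ, ∀ n : ℤ, y n = Complex.exp (Complex.I * (α : ℂ)) * x n := by
  classical
  -- basic facts about circle points
  have hzabs : ∀ ω : ℝ, ‖Complex.exp (-Complex.I * ω)‖ = 1 := by
    intro ω; rw [Complex.norm_exp]; simp
  have hzne : ∀ ω : ℝ, Complex.exp (-Complex.I * ω) ≠ 0 := fun ω => Complex.exp_ne_zero _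
  have hconjz : ∀ ω : ℝ, (starRingEnd ℂ) (Complex.exp (-Complex.I * ω)) * Complex.exp (-Complex.I * ω) = 1 := by
    intro ω
    rw [← Complex.inv_eq_conj (hzabs ω)]
    exact inv_mul_cancel₀ (hzne ω)
  -- the polynomials
  set Px : Polynomial ℂ := ∑ n ∈ Finset.range N, Polynomial.C (x n) * X ^ n with hPx
  set Q : Polynomial ℂ := ∑ n ∈ Finset.range N, Polynomial.C (y n) * X ^ n with hQ
  set Pst : Polynomial ℂ := ∑ n ∈ Finset.range N, Polynomial.C ((starRingEnd ℂ) (x n)) * X ^ (N - 1 - n) with hPst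
  set Qst : Polynomial ℂ := ∑ n ∈ Finset.range N, Polynomial.C ((starRingEnd ℂ) (y n)) * X ^ (N - 1 - n) with hQst
  set D : Polynomial ℂ := ∏ j ∈ Finset.range (N-1), (X - Polynomial.C (β j)) with hD
  -- evaluation lemmas
  have evalSum : ∀ (f : ℤ → ℂ) (ω : ℝ),
      Polynomial.eval (Complex.exp (-Complex.I * ω)) (∑ n ∈ Finset.range N, Polynomial.C (f n) * X ^ n)
        = ∑ n ∈ Finset.range N, f n * Complex.exp (-Complex.I * ω * n) := by
    intro f ω
    rw [Polynomial.eval_finset_sum]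
    refine Finset.sum_congr rfl fun n _ => ?_
    rw [Polynomial.eval_mul, Polynomial.eval_C, Polynomial.eval_pow, Polynomial.eval_X,
      ← Complex.exp_nat_mul]
    congr 2
    ring
  have evalD : ∀ z : ℂ, D.eval z = ∏ j ∈ Finset.range (N-1), (z - β j) := by
    intro z; simp [hD, Polynomial.eval_prod]
  have evalStar : ∀ (f : ℤ → ℂ) (ω : ℝ),
      Polynomial.eval (Complex.exp (-Complex.I * ω))
        (∑ n ∈ Finset.range N, Polynomial.C ((starRingEnd ℂ) (f n)) * X ^ (N - 1 - n))
        = Complex.exp (-Complex.I * ω) ^ (N-1) *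
          (starRingEnd ℂ) (Polynomial.eval (Complex.exp (-Complex.I * ω))
            (∑ n ∈ Finset.range N, Polynomial.C (f n) * X ^ n)) := by
    intro f ω
    set z := Complex.exp (-Complex.I * ω) with hzdef
    rw [Polynomial.eval_finset_sum, Polynomial.eval_finset_sum, map_sum, Finset.mul_sum]
    refine Finset.sum_congr rfl fun n hn => ?_
    have hn' : n ≤ N - 1 := by have := Finset.mem_range.mp hn; omega
    rw [Polynomial.eval_mul, Polynomial.eval_C, Polynomial.eval_pow, Polynomial.eval_X,
        Polynomial.eval_mul, Polynomial.eval_C, Polynomial.eval_pow, Polynomial.eval_X, map_mul, map_pow]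
    have key : z ^ (N-1) * ((starRingEnd ℂ) z) ^ n = z ^ (N-1-n) := by
      have hsplit : N - 1 = (N-1-n) + n := (Nat.sub_add_cancel hn').symm
      rw [hsplit, Nat.add_sub_cancel, pow_add, mul_assoc, ← mul_pow, mul_comm z, hconjz ω, one_pow, mul_one]
    rw [← key]; ring
  -- Px = C C * D
  have hPxD : Px = Polynomial.C C * D := by
    apply poly_eq_of_circle
    intro t
    rw [hPx, evalSum x t, hfact t, Polynomial.eval_mul, Polynomial.eval_C, evalD]
  -- |Q| = |Px| on the circle
  have habs : ∀ t : ℝ, ‖Q.eval (Complex.exp (-Complex.I * t))‖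
      = ‖Px.eval (Complex.exp (-Complex.I * t))‖ := by
    intro t
    rw [hQ, hPx, evalSum y t, evalSum x t]
    exact hint t
  -- Q * Qst = Px * Pst
  have hQQst : Q * Qst = Px * Pst := by
    apply poly_eq_of_circle
    intro t
    rw [Polynomial.eval_mul, Polynomial.eval_mul, hQst, hPst, evalStar y t, evalStar x t, ← hQ, ← hPx]
    have h2 : Q.eval (Complex.exp (-Complex.I * t)) * (starRingEnd ℂ) (Q.eval (Complex.exp (-Complex.I * t)))
        = Px.eval (Complex.exp (-Complex.I * t)) * (starRingEnd ℂ) (Px.eval (Complex.exp (-Complex.I * t))) := by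
      rw [Complex.mul_conj, Complex.mul_conj, Complex.normSq_eq_norm_sq, Complex.normSq_eq_norm_sq, habs t]
    linear_combination (Complex.exp (-Complex.I * t)) ^ (N-1) * h2
  -- Pst = C c' * D
  set c' : ℂ := (starRingEnd ℂ) C * ∏ j ∈ Finset.range (N-1), (-(starRingEnd ℂ) (β j)) with hc'def
  have hβconj : ∀ j ∈ Finset.range (N-1), (starRingEnd ℂ) (β j) * β j = 1 := by
    intro j hj
    have h1 : ‖β j‖ = 1 := hβ j (Finset.mem_range.mp hj)
    rw [mul_comm, Complex.mul_conj, Complex.normSq_eq_norm_sq, h1]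
    norm_num
  have hPstD : Pst = Polynomial.C c' * D := by
    apply poly_eq_of_circle
    intro t
    set z := Complex.exp (-Complex.I * t) with hzdef
    rw [hPst, evalStar x t, ← hPx, Polynomial.eval_mul, Polynomial.eval_C, evalD]
    have hPe : Polynomial.eval z Px = C * ∏ j ∈ Finset.range (N-1), (z - β j) := by
      rw [hPxD, Polynomial.eval_mul, Polynomial.eval_C, evalD]
    rw [hPe]
    have hzk : z ^ (N-1) = ∏ _j ∈ Finset.range (N-1), z := by
      rw [Finset.prod_const, Finset.card_range]
    calc z ^ (N-1) * (starRingEnd ℂ) (C * ∏ j ∈ Finset.range (N-1), (z - β j))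
        = (starRingEnd ℂ) C * ∏ j ∈ Finset.range (N-1), (z * (starRingEnd ℂ) (z - β j)) := by
          rw [map_mul, map_prod, hzk, Finset.prod_mul_distrib]; ring
      _ = (starRingEnd ℂ) C * ∏ j ∈ Finset.range (N-1), (-(starRingEnd ℂ) (β j) * (z - β j)) := by
          congr 1
          refine Finset.prod_congr rfl fun j hj => ?_
          rw [map_sub]
          linear_combination (hconjz t) - hβconj j hj
      _ = c' * ∏ j ∈ Finset.range (N-1), (z - β j) := by
          rw [Finset.prod_mul_distrib, hc'def]; ring
  have hMain : Q * Qst = Polynomial.C (C * c') * (D * D) := by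
    rw [hQQst, hPxD, hPstD, hc'def]
    simp only [map_mul, map_prod]
    ring
  have hβne : ∀ j ∈ Finset.range (N-1), β j ≠ 0 := by
    intro j hj h0
    have h1 := hβ j (Finset.mem_range.mp hj)
    rw [h0] at h1; simp at h1
  have hc' : c' ≠ 0 := by
    rw [hc'def]
    apply mul_ne_zero
    · simpa using hC
    · rw [Finset.prod_ne_zero_iff]
      intro j hj
      simpa using hβne j hj
  have hDev0 : D.eval 0 ≠ 0 := by
    rw [evalD, Finset.prod_ne_zero_iff]
    intro j hj
    simpa using hβne j hj
  have hDne : D ≠ 0 := fun h => hDev0 (by rw [h]; simp)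
  have hQev0 : Q.eval 0 = y 0 := by
    rw [hQ, Polynomial.eval_finset_sum, Finset.sum_eq_single 0]
    · simp
    · intro n hn hne
      simp [zero_pow hne]
    · intro h; exact absurd (Finset.mem_range.mpr (by omega)) h
  have hcastN : ((N - 1 : ℕ) : ℤ) = (N:ℤ) - 1 := by omega
  have hQstev0 : Qst.eval 0 = (starRingEnd ℂ) (y ((N:ℤ) - 1)) := by
    rw [hQst, Polynomial.eval_finset_sum, Finset.sum_eq_single (N-1)]
    · simp [hcastN]
    · intro n hn hne
      have h1 : N - 1 - n ≠ 0 := by have := Finset.mem_range.mp hn; omega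
      simp [zero_pow h1]
    · intro h; exact absurd (Finset.mem_range.mpr (by omega)) h
  have hne0 : Q.eval 0 ≠ 0 ∧ Qst.eval 0 ≠ 0 := by
    have h := congrArg (Polynomial.eval 0) hMain
    simp only [Polynomial.eval_mul, Polynomial.eval_C] at h
    have hrhs : (C * c') * (D.eval 0 * D.eval 0) ≠ 0 :=
      mul_ne_zero (mul_ne_zero hC hc') (mul_ne_zero hDev0 hDev0)
    rw [← h] at hrhs
    exact ⟨left_ne_zero_of_mul hrhs, right_ne_zero_of_mul hrhs⟩
  have hy0 : y 0 ≠ 0 := by rw [← hQev0]; exact hne0.1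
  have hyN : y ((N:ℤ)-1) ≠ 0 := by
    have h := hne0.2; rw [hQstev0] at h; simpa using h
  have hQne : Q ≠ 0 := fun h => hne0.1 (by rw [h]; simp)
  have hQstne : Qst ≠ 0 := fun h => hne0.2 (by rw [h]; simp)
  have coeffSum : ∀ (f : ℤ → ℂ) (m : ℕ),
      (∑ n ∈ Finset.range N, Polynomial.C (f n) * X ^ n).coeff m = if m < N then f m else 0 := by
    intro f m
    simp only [Polynomial.finset_sum_coeff, Polynomial.coeff_C_mul, Polynomial.coeff_X_pow,
      mul_ite, mul_one, mul_zero, Finset.sum_ite_eq, Finset.mem_range]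
  have hdegQ : Q.natDegree = N - 1 := by
    apply le_antisymm
    · rw [hQ]
      apply Polynomial.natDegree_sum_le_of_forall_le
      intro n hn
      refine le_trans (Polynomial.natDegree_C_mul_le _ _) ?_
      rw [Polynomial.natDegree_X_pow]
      have := Finset.mem_range.mp hn; omega
    · apply Polynomial.le_natDegree_of_ne_zero
      rw [hQ, coeffSum y (N-1), if_pos (by omega), hcastN]
      exact hyN
  have hcardQ : Multiset.card Q.roots = N - 1 := by
    rw [← hdegQ]
    exact Polynomial.splits_iff_card_roots.mp (IsAlgClosed.splits Q)
  have hDms : D = (((Finset.range (N-1)).val.map β).map (fun a => X - Polynomial.C a)).prod := by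
    rw [Multiset.map_map, hD]
    rfl
  have hDroots : D.roots = (Finset.range (N-1)).val.map β := by
    rw [hDms, Polynomial.roots_multiset_prod_X_sub_C]
  have hrootsEq : Q.roots + Qst.roots = D.roots + D.roots := by
    have h1 : (Q * Qst).roots = Q.roots + Qst.roots := Polynomial.roots_mul (mul_ne_zero hQne hQstne)
    have h2 : (Polynomial.C (C * c') * (D * D)).roots = D.roots + D.roots := by
      rw [Polynomial.roots_C_mul _ (mul_ne_zero hC hc'), Polynomial.roots_mul (mul_ne_zero hDne hDne)]
    rw [← h1, hMain, h2]
  have hQrootsUni : ∀ r ∈ Q.roots, ‖r‖ = 1 := by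
    intro r hr
    have hrD : r ∈ D.roots := by
      have hmem : r ∈ Q.roots + Qst.roots := Multiset.mem_add.mpr (Or.inl hr)
      rw [hrootsEq] at hmem
      exact (Multiset.mem_add.mp hmem).elim id id
    rw [hDroots] at hrD
    obtain ⟨j, hj, rfl⟩ := Multiset.mem_map.mp hrD
    exact hβ j (by simpa using hj)
  set lc := Q.leadingCoeff with hlc
  have hlcne : lc ≠ 0 := Polynomial.leadingCoeff_ne_zero.mpr hQne
  have hcardQ' : Multiset.card Q.roots = Q.natDegree := by rw [hcardQ, hdegQ]
  have hQfact : Polynomial.C lc * (Multiset.map (fun a => X - Polynomial.C a) Q.roots).prod = Q :=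
    Polynomial.C_leadingCoeff_mul_prod_multiset_X_sub_C hcardQ'
  set e : ℂ := (starRingEnd ℂ) lc * (Multiset.map (fun a => -(starRingEnd ℂ) a) Q.roots).prod with he
  have hQstfact : Qst = Polynomial.C e * (Multiset.map (fun a => X - Polynomial.C a) Q.roots).prod := by
    apply poly_eq_of_circle
    intro t
    set z := Complex.exp (-Complex.I * t) with hzdef
    have hQe : Polynomial.eval z Q = lc * (Multiset.map (fun a => z - a) Q.roots).prod := by
      conv_lhs => rw [← hQfact]
      rw [Polynomial.eval_mul, Polynomial.eval_C, Polynomial.eval_multiset_prod, Multiset.map_map]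
      congr 2
      apply Multiset.map_congr rfl
      intro r _
      simp
    rw [hQst, evalStar y t, ← hQ, hQe]
    rw [Polynomial.eval_mul, Polynomial.eval_C, Polynomial.eval_multiset_prod, Multiset.map_map]
    have hrhsmap : Multiset.map (Polynomial.eval z ∘ fun a => X - Polynomial.C a) Q.roots
        = Multiset.map (fun a => z - a) Q.roots := by
      apply Multiset.map_congr rfl
      intro r _
      simp
    rw [hrhsmap]
    rw [map_mul, map_multiset_prod, Multiset.map_map]
    have hzc : z ^ (N - 1) = (Multiset.map (fun _ => z) Q.roots).prod := by
      rw [Multiset.map_const', Multiset.prod_replicate, hcardQ]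
    rw [hzc, he]
    have hcomb : (Multiset.map (fun _ => z) Q.roots).prod *
          (Multiset.map (⇑(starRingEnd ℂ) ∘ fun a => z - a) Q.roots).prod
        = (Multiset.map (fun a => -(starRingEnd ℂ) a) Q.roots).prod *
          (Multiset.map (fun a => z - a) Q.roots).prod := by
      rw [← Multiset.prod_map_mul, ← Multiset.prod_map_mul]
      congr 1
      apply Multiset.map_congr rfl
      intro r hr
      have hr1 : (starRingEnd ℂ) r * r = 1 := by
        have h1 := hQrootsUni r hr
        rw [mul_comm, Complex.mul_conj, Complex.normSq_eq_norm_sq, h1]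
        norm_num
      simp only [Function.comp_apply, map_sub]
      linear_combination hconjz t - hr1
    linear_combination (starRingEnd ℂ) lc * hcomb
  have hQrootsD : Q.roots = D.roots := by
    have he0 : e ≠ 0 := by
      rw [he]
      apply mul_ne_zero
      · simpa using hlcne
      · apply Multiset.prod_ne_zero
        intro h0
        obtain ⟨r, hr, hre⟩ := Multiset.mem_map.mp h0
        have h1 : (starRingEnd ℂ) r = 0 := by linear_combination -hre
        have h2 : ‖r‖ = 1 := hQrootsUni r hr
        rw [show r = 0 by simpa using h1] at h2
        simp at h2
    have hQstroots : Qst.roots = Q.roots := by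
      rw [hQstfact, Polynomial.roots_C_mul _ he0, Polynomial.roots_multiset_prod_X_sub_C]
    have h := hrootsEq
    rw [hQstroots] at h
    rw [Multiset.ext]
    intro a
    have hcnt := congrArg (Multiset.count a) h
    simp only [Multiset.count_add] at hcnt
    omega
  have hQD : Q = Polynomial.C lc * D := by
    conv_lhs => rw [← hQfact]
    rw [hQrootsD, hDroots, ← hDms]
  have hfinal : Polynomial.C C * Q = Polynomial.C lc * Px := by
    rw [hQD, hPxD]; ring
  have hPxcoeff : Px.coeff (N-1) = x ((N:ℤ)-1) := by
    rw [hPx, coeffSum x (N-1), if_pos (by omega), hcastN]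
  have hPxne : Px ≠ 0 := fun h => hxN (by rw [← hPxcoeff, h, Polynomial.coeff_zero])
  have hex : ∃ t : ℝ, Polynomial.eval (Complex.exp (-Complex.I * t)) Px ≠ 0 := by
    by_contra hcon
    push_neg at hcon
    exact hPxne (poly_eq_of_circle Px 0 (fun t => by simpa using hcon t))
  obtain ⟨t0, ht0⟩ := hex
  have hlcabs : ‖lc‖ = ‖C‖ := by
    have h := congrArg (Polynomial.eval (Complex.exp (-Complex.I * t0))) hfinal
    simp only [Polynomial.eval_mul, Polynomial.eval_C] at h
    have h2 := congrArg norm h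
    rw [norm_mul, norm_mul, habs t0] at h2
    have habsne : ‖Polynomial.eval (Complex.exp (-Complex.I * t0)) Px‖ ≠ 0 := by
      simpa using ht0
    exact (mul_right_cancel₀ habsne h2).symm
  set lam := lc / C with hlam
  have hlamabs : ‖lam‖ = 1 := by
    rw [hlam, norm_div, hlcabs]
    exact div_self (by simpa using hC)
  refine ⟨lam.arg, ?_⟩
  have hexp : Complex.exp (Complex.I * lam.arg) = lam := by
    have h := Complex.norm_mul_exp_arg_mul_I lam
    rw [hlamabs] at h
    rw [mul_comm]
    simpa using h
  intro n
  rw [hexp]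
  by_cases hn : n < 0 ∨ (N:ℤ) ≤ n
  · rw [hysupp n hn, hxsupp n hn, mul_zero]
  · push_neg at hn
    obtain ⟨hn1, hn2⟩ := hn
    obtain ⟨mm, rfl⟩ : ∃ mm : ℕ, n = (mm:ℤ) := ⟨n.toNat, (Int.toNat_of_nonneg hn1).symm⟩
    have hmN : mm < N := by exact_mod_cast hn2
    have h := congrArg (fun p => Polynomial.coeff p mm) hfinal
    simp only [Polynomial.coeff_C_mul] at h
    rw [hQ, hPx, coeffSum y mm, coeffSum x mm, if_pos hmN, if_pos hmN] at h
    rw [hlam]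
    field_simp
    linear_combination h
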